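/- The leave-one-out error in RBF interpolation admits the closed form e_i = f_i − R^{(i)}(x_i) = c_i / (A^{-1})_{ii}, where c = A^{-1} f is the coefficient vector of the full interpolant, A is the (invertible, symmetric positive definite) interpolation matrix, and R^{(i)} is the interpolant constructed from all data points except the i-th. -/

import Mathlib

/-- Rippa's formula: the leave-one-out error equals c_i / (A⁻¹)_{ii}. -/
theorem stmt_8 {M N : ℕ} (φ : ℝ → ℝ)
    (x : Fin N → EuclideanSpace ℝ (Fin M)) (hx : Function.Injective x)
    (A : Matrix (Fin N) (Fin N) ℝ)
    (hA : ∀ i k, A i k = φ ‖x i - x k‖)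
    (hpd : A.PosDef) (f : Fin N → ℝ)
    (c : Fin N → ℝ) (hc : c = A⁻¹.mulVec f)
    (i : Fin N) (c' : {k : Fin N // k ≠ i} → ℝ)
    (hc' : ∀ j : {j : Fin N // j ≠ i}, ∑ k : {k : Fin N // k ≠ i},
      c' k * φ ‖x j.1 - x k.1‖ = f j.1) :
    f i - ∑ k : {k : Fin N // k ≠ i}, c' k * φ ‖x i - x k.1‖ =
      c i / A⁻¹ i i := by
  have hinv : IsUnit A.det := isUnit_iff_ne_zero.mpr hpd.det_pos.ne'
  set B := A⁻¹ with hB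
  set ε := f i - ∑ k : {k : Fin N // k ≠ i}, c' k * φ ‖x i - x k.1‖ with hε
  set u : Fin N → ℝ := fun k => if h : k = i then 0 else c' ⟨k, h⟩ with hu
  have hui : u i = 0 := by simp [hu]
  have hsum : ∀ j, A.mulVec u j
      = ∑ k : {k : Fin N // k ≠ i}, c' k * φ ‖x j - x k.1‖ := by
    intro j
    rw [Matrix.mulVec, dotProduct,
      ← Finset.add_sum_erase _ _ (Finset.mem_univ i), hui, mul_zero, zero_add,
      Finset.sum_subtype (p := fun k => k ≠ i) _ (by simp) (fun k => A j k * u k)]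
    refine Finset.sum_congr rfl fun k _ => ?_
    simp [hu, k.2, hA, mul_comm]
  have hfeq : f = A.mulVec u + Pi.single i ε := by
    funext j
    by_cases hj : j = i
    · subst hj
      simp only [Pi.add_apply, Pi.single_eq_same, hsum, hε]
      ring
    · simp [Pi.single_eq_of_ne hj, hsum, hc' ⟨j, hj⟩]
  have hcu : c = u + fun j => ε * B j i := by
    rw [hc, hfeq, Matrix.mulVec_add]
    congr 1
    · rw [hB, Matrix.mulVec_mulVec, Matrix.nonsing_inv_mul A hinv, Matrix.one_mulVec]
    · funext j
      simp [Matrix.mulVec, dotProduct, Pi.single_apply, mul_ite,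
        Finset.sum_ite_eq', mul_comm]
  have hBpos : 0 < B i i := by
    have hBpd : B.PosDef := hpd.inv
    have h := hBpd.dotProduct_mulVec_pos (x := Pi.single i 1) (by
      intro h
      have := congrFun h i
      simp at this)
    simpa [Matrix.mulVec, dotProduct, Pi.single_apply, mul_ite,
      Finset.sum_ite_eq', ite_mul] using h
  have hci : c i = ε * B i i := by
    rw [hcu]; simp [hui]
  rw [hci]
  field_simp
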